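/- If Λ_∘ and Λ_∘' are two Hermitian matrices both satisfying G*ΛG > 0 on the unit circle and ∫ G(Ψ/(G*ΛG))G* = I, then G*(Λ_∘ - Λ_∘')G ≡ 0 on the unit circle, i.e., Λ_∘ - Λ_∘' ∈ (Range Γ)^⊥. Conversely, if Λ_∘ satisfies both conditions and X ∈ (Range Γ)^⊥, then Λ_∘ + X also satisfies both conditions. -/

import Mathlib

open Matrix MeasureTheory Real Filter
open scoped ComplexOrder

noncomputable section

abbrev Mat (n : ℕ) := Matrix (Fin n) (Fin n) ℂ
abbrev Vec (n : ℕ) := Matrix (Fin n) (Fin 1) ℂ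

/-- the point e^{jθ} on the unit circle -/
def circPt (θ : ℝ) : ℂ := Complex.exp (θ * Complex.I)

/-- G(e^{jθ}) = (e^{jθ} I - A)⁻¹ B -/
def Gm {n : ℕ} (A : Mat n) (B : Vec n) (θ : ℝ) : Vec n :=
  (circPt θ • (1 : Mat n) - A)⁻¹ * B

/-- the scalar G* Λ G at e^{jθ} -/
def quad {n : ℕ} (A : Mat n) (B : Vec n) (Λ : Mat n) (θ : ℝ) : ℂ :=
  ((Gm A B θ)ᴴ * Λ * Gm A B θ) 0 0

/-- normalized entrywise matrix integral over the unit circle -/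
def mInt {n : ℕ} (f : ℝ → Mat n) : Mat n :=
  Matrix.of fun i j => (1 / (2 * π) : ℝ) • ∫ θ in (0:ℝ)..(2 * π), f θ i j

/-- normalized scalar (complex) integral over the unit circle -/
def sInt (f : ℝ → ℂ) : ℂ := (1 / (2 * π) : ℝ) • ∫ θ in (0:ℝ)..(2 * π), f θ

/-- normalized scalar (real) integral over the unit circle -/
def sIntR (f : ℝ → ℝ) : ℝ := (1 / (2 * π)) * ∫ θ in (0:ℝ)..(2 * π), f θ

/-- all eigenvalues of A lie in the open unit disc -/
def IsStable {n : ℕ} (A : Mat n) : Prop := ∀ μ ∈ spectrum ℂ A, ‖μ‖ < 1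

/-- (A,B) is a reachable pair: the controllability matrix has full rank -/
def Reachable {n : ℕ} (A : Mat n) (B : Vec n) : Prop :=
  (Matrix.of fun (i : Fin n) (k : Fin n) => (A ^ (k : ℕ) * B) i 0).rank = n

open scoped Classical in
/-- positive semidefinite square root (junk value 0 off the psd cone) -/
def msqrt {n : ℕ} (M : Mat n) : Mat n :=
  if h : M.PosSemidef then (h.1.eigenvectorUnitary : Mat n) *
    diagonal ((↑) ∘ (√·) ∘ h.1.eigenvalues) * (star (h.1.eigenvectorUnitary : Mat n)) else 0

/-- the moment map ∫ G (Ψ/(G*ΛG)) G* -/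
def moment {n : ℕ} (A : Mat n) (B : Vec n) (Ψ : ℝ → ℝ) (Λ : Mat n) : Mat n :=
  mInt (fun θ => ((Ψ θ : ℂ) / quad A B Λ θ) • (Gm A B θ * (Gm A B θ)ᴴ))

/-- the iteration map Θ(Λ) = ∫ Λ^{1/2} G (Ψ/(G*ΛG)) G* Λ^{1/2} -/
def Theta {n : ℕ} (A : Mat n) (B : Vec n) (Ψ : ℝ → ℝ) (Λ : Mat n) : Mat n :=
  mInt (fun θ => ((Ψ θ : ℂ) / quad A B Λ θ) •
    (msqrt Λ * (Gm A B θ * (Gm A B θ)ᴴ) * msqrt Λ))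

/-- the linearization M of Θ at Λ:
M(X) = X - Λ^{1/2} ∫ (GΨG*/(G*ΛG)) (G*XG/(G*ΛG)) Λ^{1/2} -/
def Mlin {n : ℕ} (A : Mat n) (B : Vec n) (Ψ : ℝ → ℝ) (Λ : Mat n) (X : Mat n) : Mat n :=
  X - msqrt Λ * mInt (fun θ =>
    (((Ψ θ : ℂ) * (((Gm A B θ)ᴴ * X * Gm A B θ) 0 0)) / (quad A B Λ θ) ^ 2) •
      (Gm A B θ * (Gm A B θ)ᴴ)) * msqrt Λ

/-- the range of the operator Γ : Φ ↦ ∫ G Φ G* on continuous (2π-periodic) functions -/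
def RangeGamma {n : ℕ} (A : Mat n) (B : Vec n) : Set (Mat n) :=
  {M | ∃ Φ : ℝ → ℝ, Continuous Φ ∧ (∀ θ, Φ (θ + 2 * π) = Φ θ) ∧
    M = mInt (fun θ => (Φ θ : ℂ) • (Gm A B θ * (Gm A B θ)ᴴ))}

/-! ### Auxiliary lemmas -/

lemma circPt_norm (θ : ℝ) : ‖circPt θ‖ = 1 := by
  simp [circPt, Complex.norm_exp]

lemma circPt_periodic : Function.Periodic circPt (2 * π) := by
  intro θ
  simp only [circPt]
  push_cast
  rw [add_mul, Complex.exp_add, Complex.exp_two_pi_mul_I, mul_one]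

lemma isUnit_res {n : ℕ} {A : Mat n} (hA : IsStable A) (θ : ℝ) :
    IsUnit (circPt θ • (1 : Mat n) - A) := by
  have h : circPt θ ∉ spectrum ℂ A := by
    intro h
    have := hA _ h
    rw [circPt_norm] at this
    exact lt_irrefl 1 this
  have := spectrum.notMem_iff.mp h
  rwa [Algebra.algebraMap_eq_smul_one] at this

lemma det_res_ne {n : ℕ} {A : Mat n} (hA : IsStable A) (θ : ℝ) :
    (circPt θ • (1 : Mat n) - A).det ≠ 0 := by
  have := (Matrix.isUnit_iff_isUnit_det _).mp (isUnit_res hA θ)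
  exact IsUnit.ne_zero this

lemma contG {n : ℕ} {A : Mat n} (B : Vec n) (hA : IsStable A) :
    Continuous (fun θ => Gm A B θ) := by
  have hM : Continuous (fun θ : ℝ => circPt θ • (1 : Mat n) - A) := by
    have : Continuous circPt := by
      unfold circPt; exact Complex.continuous_exp.comp (by continuity)
    exact (this.smul continuous_const).sub continuous_const
  have hGm : (fun θ => Gm A B θ) =
      fun θ => ((circPt θ • (1 : Mat n) - A).det)⁻¹ •
        ((circPt θ • (1 : Mat n) - A).adjugate * B) := by
    funext θ
    rw [Gm, Matrix.inv_def, Ring.inverse_eq_inv', Matrix.smul_mul]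
  rw [hGm]
  exact ((hM.matrix_det).inv₀ (det_res_ne hA)).smul
    (hM.matrix_adjugate.matrix_mul continuous_const)

lemma Gm_periodic {n : ℕ} (A : Mat n) (B : Vec n) (θ : ℝ) :
    Gm A B (θ + 2 * π) = Gm A B θ := by
  unfold Gm
  rw [circPt_periodic θ]

lemma contQuad {n : ℕ} {A : Mat n} (B : Vec n) (hA : IsStable A) (Λ : Mat n) :
    Continuous (fun θ => quad A B Λ θ) := by
  have h := contG (A := A) B hA
  have : Continuous (fun θ => (Gm A B θ)ᴴ * Λ * Gm A B θ) :=
    (h.matrix_conjTranspose.matrix_mul continuous_const).matrix_mul h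
  exact this.matrix_elem 0 0

lemma quad_real {n : ℕ} {A : Mat n} {B : Vec n} {Λ : Mat n} (hΛ : Λ.IsHermitian) (θ : ℝ) :
    quad A B Λ θ = ((quad A B Λ θ).re : ℂ) := by
  have h : (starRingEnd ℂ) (quad A B Λ θ) = quad A B Λ θ := by
    have h1 : ((Gm A B θ)ᴴ * Λ * Gm A B θ)ᴴ = (Gm A B θ)ᴴ * Λ * Gm A B θ := by
      rw [Matrix.conjTranspose_mul, Matrix.conjTranspose_mul, Matrix.conjTranspose_conjTranspose,
        hΛ.eq, Matrix.mul_assoc]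
    calc (starRingEnd ℂ) (quad A B Λ θ) = (((Gm A B θ)ᴴ * Λ * Gm A B θ)ᴴ) 0 0 := by
          rw [Matrix.conjTranspose_apply]; rfl
      _ = quad A B Λ θ := by rw [h1]; rfl
  exact (Complex.conj_eq_iff_re.mp h).symm

lemma quad_sub {n : ℕ} (A : Mat n) (B : Vec n) (Λ Λ' : Mat n) (θ : ℝ) :
    quad A B (Λ - Λ') θ = quad A B Λ θ - quad A B Λ' θ := by
  simp [quad, Matrix.mul_sub, Matrix.sub_mul]

lemma quad_add {n : ℕ} (A : Mat n) (B : Vec n) (Λ Λ' : Mat n) (θ : ℝ) :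
    quad A B (Λ + Λ') θ = quad A B Λ θ + quad A B Λ' θ := by
  simp [quad, Matrix.mul_add, Matrix.add_mul]

lemma entry_sum {n : ℕ} (A : Mat n) (B : Vec n) (D : Mat n) (c : ℂ) (θ : ℝ) :
    ∑ j, ∑ i, D j i * (c • (Gm A B θ * (Gm A B θ)ᴴ)) i j = c * quad A B D θ := by
  simp only [quad, Matrix.mul_apply, Matrix.smul_apply, Matrix.conjTranspose_apply,
    Fin.sum_univ_one, smul_eq_mul, Finset.mul_sum, Finset.sum_mul]
  rw [Finset.sum_comm]
  apply Finset.sum_congr rfl; intro i _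
  apply Finset.sum_congr rfl; intro j _
  ring

set_option maxHeartbeats 1000000 in
lemma pairing {n : ℕ} (D : Mat n) (f : ℝ → Mat n)
    (hf : ∀ i j, IntervalIntegrable (fun θ => f θ i j) volume 0 (2 * π)) :
    ∑ j, ∑ i, D j i * (mInt f) i j = sInt (fun θ => ∑ j, ∑ i, D j i * f θ i j) := by
  simp only [mInt, sInt, Matrix.of_apply, mul_smul_comm]
  simp only [← Finset.smul_sum]
  congr 1
  have hone : ∀ j i : Fin n, IntervalIntegrable (fun θ => D j i * f θ i j) volume 0 (2 * π) :=
    fun j i => (hf i j).const_mul _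
  have hrow : ∀ j : Fin n, IntervalIntegrable (fun θ => ∑ i, D j i * f θ i j) volume 0 (2 * π) := by
    intro j
    have := IntervalIntegrable.sum (f := fun i θ => D j i * f θ i j) (μ := volume) (a := 0)
      (b := 2 * π) Finset.univ (fun i _ => hone j i)
    have e : (∑ i, fun θ => D j i * f θ i j) = fun θ => ∑ i, D j i * f θ i j := by
      funext θ
      simp
    rw [e] at this
    exact this
  rw [intervalIntegral.integral_finset_sum (fun j _ => hrow j)]
  apply Finset.sum_congr rfl; intro j _
  rw [intervalIntegral.integral_finset_sum (fun i _ => hone j i)]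
  apply Finset.sum_congr rfl; intro i _
  rw [intervalIntegral.integral_const_mul]

/-- a nonneg continuous function with zero integral vanishes on the interval -/
lemma vanish (h : ℝ → ℝ) (hc : Continuous h) (hnn : ∀ x, 0 ≤ h x)
    (hint : ∫ θ in (0:ℝ)..(2 * π), h θ = 0) :
    ∀ x ∈ Set.Icc 0 (2 * π), h x = 0 := by
  intro x₀ hx₀
  by_contra hne
  have hpos : 0 < h x₀ := lt_of_le_of_ne (hnn x₀) (Ne.symm hne)
  have h2π : (0:ℝ) < 2 * π := by positivity
  have hae : h =ᵐ[volume.restrict (Set.Ioc 0 (2 * π))] 0 := by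
    refine (intervalIntegral.integral_eq_zero_iff_of_le_of_nonneg_ae h2π.le ?_ ?_).mp hint
    · exact ae_of_all _ hnn
    · exact hc.intervalIntegrable 0 (2 * π)
  have hnull : volume ({x | h x ≠ 0} ∩ Set.Ioc 0 (2 * π)) = 0 := by
    have := ae_iff.mp hae
    rwa [Measure.restrict_apply₀' measurableSet_Ioc.nullMeasurableSet] at this
  obtain ⟨δ, hδ, hball⟩ := Metric.continuous_iff.mp hc x₀ (h x₀) hpos
  set a := max (x₀ - δ) 0 with ha
  set b := min (x₀ + δ) (2 * π) with hb
  have hab : a < b := by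
    apply max_lt (lt_min (by linarith) (by linarith [hx₀.2]))
    exact lt_min (by linarith [hx₀.1]) h2π
  have hsub : Set.Ioo a b ⊆ {x | h x ≠ 0} ∩ Set.Ioc 0 (2 * π) := by
    intro x hx
    have h1 : x₀ - δ < x := lt_of_le_of_lt (le_max_left _ _) hx.1
    have h2 : x < x₀ + δ := lt_of_lt_of_le hx.2 (min_le_left _ _)
    have h0 : 0 ≤ a := le_max_right _ _
    constructor
    · have := hball x (by rw [Real.dist_eq]; rw [abs_lt]; constructor <;> linarith)
      rw [Real.dist_eq, abs_lt] at this
      have : 0 < h x := by linarith [this.1]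
      exact ne_of_gt this
    · exact ⟨lt_of_le_of_lt h0 hx.1, le_trans hx.2.le (min_le_right _ _)⟩
  have hz : volume (Set.Ioo a b) = 0 := measure_mono_null hsub hnull
  rw [Real.volume_Ioo] at hz
  have : (ENNReal.ofReal (b - a)) ≠ 0 := by
    simp only [ne_eq, ENNReal.ofReal_eq_zero, not_le]; linarith
  exact this hz

/-- any two solutions of the dual stationarity conditions differ by
an element of (Range Γ)^⊥, and conversely the conditions are invariant under
addition of elements of (Range Γ)^⊥. -/
theorem stmt7 {n : ℕ} (A : Mat n) (B : Vec n) (Ψ : ℝ → ℝ)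
    (hA : IsStable A) (hR : Reachable A B)
    (hΨc : Continuous Ψ) (hΨpos : ∀ θ, 0 < Ψ θ) :
    (∀ Λ Λ' : Mat n, Λ.IsHermitian → Λ'.IsHermitian →
      (∀ θ, 0 < (quad A B Λ θ).re) → moment A B Ψ Λ = 1 →
      (∀ θ, 0 < (quad A B Λ' θ).re) → moment A B Ψ Λ' = 1 →
      ∀ θ : ℝ, (Gm A B θ)ᴴ * (Λ - Λ') * Gm A B θ = 0) ∧
    (∀ Λ X : Mat n, Λ.IsHermitian →
      (∀ θ, 0 < (quad A B Λ θ).re) → moment A B Ψ Λ = 1 →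
      X.IsHermitian → (∀ θ : ℝ, (Gm A B θ)ᴴ * X * Gm A B θ = 0) →
      (∀ θ, 0 < (quad A B (Λ + X) θ).re) ∧ moment A B Ψ (Λ + X) = 1) := by
  constructor
  · -- uniqueness part
    intro Λ Λ' hΛ hΛ' hq hm hq' hm' θ₀
    have hcont := contG (A := A) B hA
    set q : ℝ → ℝ := fun θ => (quad A B Λ θ).re with hqdef
    set q' : ℝ → ℝ := fun θ => (quad A B Λ' θ).re with hq'def
    have hqr : ∀ θ, quad A B Λ θ = ((q θ : ℝ) : ℂ) := fun θ => quad_real hΛ θ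
    have hqr' : ∀ θ, quad A B Λ' θ = ((q' θ : ℝ) : ℂ) := fun θ => quad_real hΛ' θ
    have hqc : Continuous q := Complex.continuous_re.comp (contQuad B hA Λ)
    have hqc' : Continuous q' := Complex.continuous_re.comp (contQuad B hA Λ')
    have hqne : ∀ θ, quad A B Λ θ ≠ 0 := by
      intro θ; rw [hqr θ]
      exact_mod_cast ne_of_gt (hq θ)
    have hqne' : ∀ θ, quad A B Λ' θ ≠ 0 := by
      intro θ; rw [hqr' θ]
      exact_mod_cast ne_of_gt (hq' θ)
    set D : Mat n := Λ - Λ' with hD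
    -- pairing identity for any solution
    have key : ∀ Λ₀ : Mat n, (∀ θ, quad A B Λ₀ θ ≠ 0) → Continuous (fun θ => quad A B Λ₀ θ) →
        moment A B Ψ Λ₀ = 1 →
        sInt (fun θ => ((Ψ θ : ℂ) / quad A B Λ₀ θ) * quad A B D θ)
          = ∑ j, ∑ i, D j i * (1 : Mat n) i j := by
      intro Λ₀ hne hqc₀ hm₀
      have hc1 : Continuous fun θ => (Ψ θ : ℂ) / quad A B Λ₀ θ :=
        (Complex.continuous_ofReal.comp hΨc).div hqc₀ hne
      have hint : ∀ i j, IntervalIntegrable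
          (fun θ => (((Ψ θ : ℂ) / quad A B Λ₀ θ) • (Gm A B θ * (Gm A B θ)ᴴ)) i j)
          volume 0 (2 * π) := by
        intro i j
        apply Continuous.intervalIntegrable
        have hc2 : Continuous fun θ => (Gm A B θ * (Gm A B θ)ᴴ) i j :=
          (hcont.matrix_mul hcont.matrix_conjTranspose).matrix_elem i j
        simp only [Matrix.smul_apply, smul_eq_mul]
        exact hc1.mul hc2
      have h2 : (∑ j, ∑ i, D j i * (moment A B Ψ Λ₀) i j)
          = sInt (fun θ => ((Ψ θ : ℂ) / quad A B Λ₀ θ) * quad A B D θ) := by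
        unfold moment
        rw [pairing D _ hint]
        congr 1
        funext θ
        exact entry_sum A B D _ θ
      rw [← h2, hm₀]
    have e1 := key Λ hqne (contQuad B hA Λ) hm
    have e2 := key Λ' hqne' (contQuad B hA Λ') hm'
    have e3 : sInt (fun θ => ((Ψ θ : ℂ) / quad A B Λ θ) * quad A B D θ)
        = sInt (fun θ => ((Ψ θ : ℂ) / quad A B Λ' θ) * quad A B D θ) := e1.trans e2.symm
    -- pass to the real nonnegative integrand
    set h : ℝ → ℝ := fun θ => Ψ θ * (q θ - q' θ) ^ 2 / (q θ * q' θ) with hhdef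
    have hden : ∀ θ, q θ * q' θ ≠ 0 := fun θ => ne_of_gt (mul_pos (hq θ) (hq' θ))
    have hpt : ∀ θ, ((Ψ θ : ℂ) / quad A B Λ θ) * quad A B D θ
        - ((Ψ θ : ℂ) / quad A B Λ' θ) * quad A B D θ = ((-(h θ) : ℝ) : ℂ) := by
      intro θ
      have h1 : (q θ : ℂ) ≠ 0 := by exact_mod_cast ne_of_gt (hq θ)
      have h2 : (q' θ : ℂ) ≠ 0 := by exact_mod_cast ne_of_gt (hq' θ)
      rw [hD, quad_sub, hqr θ, hqr' θ]
      simp only [hhdef]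
      push_cast
      field_simp
      ring
    have hf1 : IntervalIntegrable (fun θ => ((Ψ θ : ℂ) / quad A B Λ θ) * quad A B D θ)
        volume 0 (2 * π) := by
      apply Continuous.intervalIntegrable
      exact ((Complex.continuous_ofReal.comp hΨc).div (contQuad B hA Λ) hqne).mul
        (contQuad B hA D)
    have hf2 : IntervalIntegrable (fun θ => ((Ψ θ : ℂ) / quad A B Λ' θ) * quad A B D θ)
        volume 0 (2 * π) := by
      apply Continuous.intervalIntegrable
      exact ((Complex.continuous_ofReal.comp hΨc).div (contQuad B hA Λ') hqne').mul
        (contQuad B hA D)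
    have hIeq : (∫ θ in (0:ℝ)..(2 * π), ((Ψ θ : ℂ) / quad A B Λ θ) * quad A B D θ)
        = ∫ θ in (0:ℝ)..(2 * π), ((Ψ θ : ℂ) / quad A B Λ' θ) * quad A B D θ := by
      have hne : (1 / (2 * π) : ℝ) ≠ 0 := by positivity
      unfold sInt at e3
      exact smul_right_injective ℂ hne e3
    have hint0 : (∫ θ in (0:ℝ)..(2 * π), h θ) = 0 := by
      have hsub : (∫ θ in (0:ℝ)..(2 * π),
          (((Ψ θ : ℂ) / quad A B Λ θ) * quad A B D θ
            - ((Ψ θ : ℂ) / quad A B Λ' θ) * quad A B D θ)) = 0 := by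
        rw [intervalIntegral.integral_sub hf1 hf2, hIeq, sub_self]
      have : (∫ θ in (0:ℝ)..(2 * π), ((-(h θ) : ℝ) : ℂ)) = 0 := by
        rw [← hsub]
        apply intervalIntegral.integral_congr
        intro θ _
        exact (hpt θ).symm
      rw [intervalIntegral.integral_ofReal] at this
      have h0 : (∫ θ in (0:ℝ)..(2 * π), -(h θ)) = 0 := by exact_mod_cast this
      rw [intervalIntegral.integral_neg, neg_eq_zero] at h0
      exact h0
    -- the integrand is nonneg and continuous, hence vanishes on [0, 2π]
    have hhc : Continuous h := ((hΨc.mul ((hqc.sub hqc').pow 2)).div (hqc.mul hqc') hden)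
    have hhnn : ∀ x, 0 ≤ h x := by
      intro x
      apply div_nonneg
      · exact mul_nonneg (hΨpos x).le (sq_nonneg _)
      · exact (mul_pos (hq x) (hq' x)).le
    have hvan := vanish h hhc hhnn hint0
    have hqq' : ∀ x ∈ Set.Icc (0:ℝ) (2 * π), q x = q' x := by
      intro x hx
      have := hvan x hx
      rw [hhdef] at this
      simp only [div_eq_zero_iff] at this
      rcases this with h1 | h1
      · rcases mul_eq_zero.mp h1 with h2 | h2
        · exact absurd h2 (ne_of_gt (hΨpos x))
        · have := (pow_eq_zero_iff (two_ne_zero (α := ℕ))).mp h2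
          linarith [sub_eq_zero.mp this]
      · exact absurd h1 (hden x)
    -- extend by periodicity
    have hper : Function.Periodic (fun θ => q θ - q' θ) (2 * π) := by
      intro θ
      have hg : Gm A B (θ + 2 * π) = Gm A B θ := Gm_periodic A B θ
      simp only [hqdef, hq'def, quad, hg]
    have h2π : (0:ℝ) < 2 * π := by positivity
    obtain ⟨y, hy, hxy⟩ := hper.exists_mem_Ico₀ h2π θ₀
    have hy' : y ∈ Set.Icc (0:ℝ) (2 * π) := ⟨hy.1, hy.2.le⟩
    have hq0 : q θ₀ - q' θ₀ = 0 := by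
      rw [hxy]
      rw [hqq' y hy']
      ring
    -- conclude
    have hquad0 : quad A B D θ₀ = 0 := by
      rw [hD, quad_sub, hqr θ₀, hqr' θ₀]
      rw [show (q θ₀ : ℂ) - (q' θ₀ : ℂ) = ((q θ₀ - q' θ₀ : ℝ) : ℂ) by push_cast; ring, hq0]
      simp
    ext i j
    have hi : i = 0 := Subsingleton.elim i 0
    have hj : j = 0 := Subsingleton.elim j 0
    subst hi hj
    rw [Matrix.zero_apply]
    exact hquad0
  · -- invariance part
    intro Λ X hΛ hq hm hX hXG
    have hquadeq : ∀ θ, quad A B (Λ + X) θ = quad A B Λ θ := by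
      intro θ
      rw [quad_add]
      have hx : quad A B X θ = 0 := by
        unfold quad
        rw [hXG θ, Matrix.zero_apply]
      rw [hx, add_zero]
    constructor
    · intro θ
      rw [hquadeq θ]
      exact hq θ
    · have heq : (fun θ => ((Ψ θ : ℂ) / quad A B (Λ + X) θ) • (Gm A B θ * (Gm A B θ)ᴴ))
          = (fun θ => ((Ψ θ : ℂ) / quad A B Λ θ) • (Gm A B θ * (Gm A B θ)ᴴ)) := by
        funext θ
        rw [hquadeq θ]
      have : moment A B Ψ (Λ + X) = moment A B Ψ Λ := by
        unfold moment
        rw [heq]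
      rw [this]
      exact hm
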